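/- Let 𝔤 be a finite-dimensional real Lie algebra with an invariant inner product ⟨·,·⟩ (i.e., ⟨[X,Y],Z⟩ = ⟨X,[Y,Z]⟩ for all X,Y,Z ∈ 𝔤), and for L ∈ 𝔤 let P_L denote the orthogonal projection of 𝔤 onto the range of ad_L = [L,·]. Then for all L, N, X ∈ 𝔤 one has −⟨[L,X], N⟩ = ⟨[L,N], P_L X⟩, and [L,N] lies in the range of ad_L. Consequently, the vector field L ↦ [L,[L,N]] is the gradient of the function H(L) = κ(L,N) (with κ = −⟨·,·⟩) relative to the normal metric, which pairs tangent vectors [L,X] and [L,Y] via ⟨P_L X, P_L Y⟩. -/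

import Mathlib

open scoped InnerProductSpace

/-- Let `𝔤` be a finite-dimensional real Lie algebra with an invariant inner product,
and let `P_L` be the orthogonal projection onto the range of `ad_L`.  Then
`−⟨[L,X], N⟩ = ⟨[L,N], P_L X⟩` and `[L,N]` lies in the range of `ad_L`; hence
`L ↦ [L,[L,N]]` is the gradient of `H(L) = κ(L,N)` (with `κ = −⟨·,·⟩`) relative to
the normal metric `([L,X],[L,Y]) ↦ ⟨P_L X, P_L Y⟩`. -/
theorem stmt_0
    {g : Type*} [NormedAddCommGroup g] [InnerProductSpace ℝ g]
    [FiniteDimensional ℝ g] [LieRing g]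
    (hsmul : ∀ (c : ℝ) (X Y : g), ⁅X, c • Y⁆ = c • ⁅X, Y⁆)
    (hinv : ∀ X Y Z : g, ⟪⁅X, Y⁆, Z⟫_ℝ = ⟪X, ⁅Y, Z⁆⟫_ℝ)
    (L N X : g) :
    -⟪⁅L, X⁆, N⟫_ℝ =
      ⟪⁅L, N⁆,
        ((Submodule.orthogonalProjectionOnto (@Submodule.span ℝ g _ (@NormedAddCommGroup.toAddCommGroup g _).toAddCommMonoid _ {z : g | ∃ Y, ⁅L, Y⁆ = z}) X : g))⟫_ℝ ∧
    ⁅L, N⁆ ∈ @Submodule.span ℝ g _ (@NormedAddCommGroup.toAddCommGroup g _).toAddCommMonoid _ {z : g | ∃ Y, ⁅L, Y⁆ = z} := by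
  letI : AddCommGroup g := NormedAddCommGroup.toAddCommGroup
  set K := @Submodule.span ℝ g _ (@NormedAddCommGroup.toAddCommGroup g _).toAddCommMonoid _ {z : g | ∃ Y, ⁅L, Y⁆ = z} with hK
  have hmem : ⁅L, N⁆ ∈ K := Submodule.subset_span ⟨N, rfl⟩
  refine ⟨?_, hmem⟩
  have horth : ⟪⁅L, N⁆, X - (K.orthogonalProjectionOnto X : g)⟫_ℝ = 0 :=
    Submodule.inner_right_of_mem_orthogonal hmem
      (Submodule.sub_starProjection_mem_orthogonal (K := K) X)
  have h1 : ⟪⁅L, N⁆, ((K.orthogonalProjectionOnto X : g))⟫_ℝ = ⟪⁅L, N⁆, X⟫_ℝ := by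
    have h2 := inner_sub_right (𝕜 := ℝ) ⁅L, N⁆ X (K.orthogonalProjectionOnto X : g)
    rw [h2] at horth
    linarith
  rw [h1]
  -- the trilinear form
  set f : g → g → g → ℝ := fun A B C => ⟪⁅A, B⁆, C⟫_ℝ with hf
  have cyc : ∀ A B C, f A B C = f B C A := by
    intro A B C
    simp only [hf]
    rw [hinv A B C, real_inner_comm]
  have addC : ∀ A B C C', f A B (C + C') = f A B C + f A B C' := by
    intro A B C C'
    simp only [hf]
    exact inner_add_right _ _ _
  have addB : ∀ A B B' C, f A (B + B') C = f A B C + f A B' C := by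
    intro A B B' C
    rw [cyc, cyc, addC, cyc C A B, cyc C A B']
  have diag : ∀ A B, f A B B = 0 := by
    intro A B
    simp only [hf]
    rw [hinv A B B]
    have e1 : (⟪A, ⁅B, B⁆⟫_ℝ) = ⟪A, ⁅(0:ℝ) • B, (0:ℝ) • B⁆⟫_ℝ := by
      rw [lie_self, lie_self]
    rw [e1, hsmul 0 ((0:ℝ) • B) B, inner_smul_right]
    simp
  have key : f L X N + f L N X = 0 := by
    have h := diag L (X + N)
    rw [addB, addC, addC, diag L X, diag L N] at h
    linarith
  have e2 : f L X N = ⟪⁅L, X⁆, N⟫_ℝ := rfl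
  have e3 : f L N X = ⟪⁅L, N⁆, X⟫_ℝ := rfl
  linarith [key, e2.symm ▸ key]
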